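/- Let α ≥ 1 be a real number and set brute(α) = 1 + exp(−α·H(1/α)). There exists a constant C > 0 such that for every natural number n ≥ 2: n^(−C) · brute(α)^n ≤ max_{k ∈ ℕ, k < n/α} C(n,k) / C(⌊αk⌋, k) ≤ n^C · brute(α)^n. -/

import Mathlib

/-- Entropy function `H(p) = −p·ln p − (1−p)·ln(1−p)` (with `0·ln 0 = 0`). -/
noncomputable def entropy (p : ℝ) : ℝ :=
  -p * Real.log p - (1 - p) * Real.log (1 - p)

/-- `brute(α) = 1 + exp(−α·H(1/α))`. -/
noncomputable def brute (α : ℝ) : ℝ := 1 + Real.exp (-α * entropy (1 / α))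

/-- The set of naturals `k` with `k < n/α` is nonempty (it contains `0`). -/
lemma ratioSet_nonempty (α : ℝ) (hα : 1 ≤ α) (n : ℕ) (hn : 2 ≤ n) :
    ((Finset.range n).filter (fun k : ℕ => (k : ℝ) < (n : ℝ) / α)).Nonempty := by
  refine ⟨0, Finset.mem_filter.mpr ⟨Finset.mem_range.mpr (by omega), ?_⟩⟩
  have h0 : (0 : ℝ) < (n : ℝ) := by exact_mod_cast (by omega : 0 < n)
  simpa using div_pos h0 (lt_of_lt_of_le zero_lt_one hα)

open Real Finset

lemma aux_entropy_one : entropy 1 = 0 := by simp [entropy]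

lemma aux_c_spec {α : ℝ} (hα : 1 < α) :
    α * entropy (1/α) = -Real.log (1/α) - (α - 1) * Real.log (1 - 1/α) := by
  have h0 : α ≠ 0 := by linarith
  rw [entropy]
  field_simp

lemma aux_ent_nonneg {α : ℝ} (hα : 1 ≤ α) : 0 ≤ entropy (1/α) := by
  have h0 : (0:ℝ) < α := by linarith
  have hp1 : 1/α ≤ 1 := by rw [div_le_one h0]; linarith
  have hp0 : (0:ℝ) ≤ 1/α := by positivity
  have h1 : Real.log (1/α) ≤ 0 := Real.log_nonpos hp0 hp1
  have h2 : Real.log (1 - 1/α) ≤ 0 := Real.log_nonpos (by linarith) (by linarith)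
  rw [entropy]
  nlinarith

lemma sum_binom (p q : ℝ) (hpq : p + q = 1) (m : ℕ) :
    ∑ j ∈ Finset.range (m + 1), (m.choose j : ℝ) * p ^ j * q ^ (m - j) = 1 := by
  have h := add_pow p q m
  rw [hpq, one_pow] at h
  rw [← h.symm]
  exact Finset.sum_congr rfl fun j _ => by ring

lemma term_le_one {p q : ℝ} (hp : 0 ≤ p) (hq : 0 ≤ q) (hpq : p + q = 1)
    {m k : ℕ} (hk : k ≤ m) : (m.choose k : ℝ) * p ^ k * q ^ (m - k) ≤ 1 := by
  rw [← sum_binom p q hpq m]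
  exact Finset.single_le_sum (f := fun j => (m.choose j : ℝ) * p ^ j * q ^ (m - j))
    (fun j _ => mul_nonneg (mul_nonneg (Nat.cast_nonneg _) (pow_nonneg hp _)) (pow_nonneg hq _))
    (Finset.mem_range.mpr (Nat.lt_succ_of_le hk))


lemma mode_max {α : ℝ} (hα : 1 < α) (k m : ℕ) (hkm : k ≤ m)
    (hm1 : (m : ℝ) ≤ α * k) (hm2 : α * k < m + 1) :
    ∀ j, (m.choose j : ℝ) * (1/α) ^ j * (1 - 1/α) ^ (m - j) ≤
      (m.choose k : ℝ) * (1/α) ^ k * (1 - 1/α) ^ (m - k) := by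
  have hα0 : (0:ℝ) < α := by linarith
  set p : ℝ := 1/α with hpdef
  set q : ℝ := 1 - 1/α with hqdef
  have hp : 0 < p := by positivity
  have hq : 0 < q := by rw [hqdef]; rw [sub_pos, div_lt_one hα0]; linarith
  set a : ℕ → ℝ := fun j => (m.choose j : ℝ) * p ^ j * q ^ (m - j) with hadef
  have ha0 : ∀ j, 0 ≤ a j := fun j =>
    mul_nonneg (mul_nonneg (Nat.cast_nonneg _) (pow_nonneg hp.le _)) (pow_nonneg hq.le _)
  have hid : ∀ j, j < m → a (j+1) * (((j:ℝ)+1) * q) = a j * (((m:ℝ) - j) * p) := by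
    intro j hj
    have hsub : m - j = (m - (j+1)) + 1 := by omega
    have hc := Nat.choose_succ_right_eq m j
    have hc' : ((m.choose (j+1)) : ℝ) * ((j:ℝ)+1) = (m.choose j : ℝ) * ((m:ℝ) - j) := by
      have := congrArg (fun x : ℕ => (x : ℝ)) hc
      push_cast [Nat.cast_sub hj.le] at this
      linarith [this]
    simp only [hadef]
    rw [hsub, pow_succ, pow_succ]
    linear_combination (p ^ j * p * q ^ (m - (j+1)) * q) * hc'
  have hup : ∀ j, j < k → a j ≤ a (j+1) := by
    intro j hj
    have hjm : j < m := lt_of_lt_of_le hj hkm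
    have h1 : ((j:ℝ)+1) ≤ (k:ℝ) := by exact_mod_cast hj
    have hstep : ((j:ℝ)+1)*(α-1) + j < (m:ℝ) := by nlinarith [mul_nonneg (sub_nonneg.mpr h1) (by linarith : (0:ℝ) ≤ α - 1)]
    have key : ((j:ℝ)+1) * q ≤ ((m:ℝ) - j) * p := by
      rw [hpdef, hqdef]
      have hne : α ≠ 0 := ne_of_gt hα0
      calc ((j:ℝ)+1) * (1 - 1/α) = ((j:ℝ)+1)*(α-1) * (1/α) := by field_simp
        _ ≤ ((m:ℝ) - j) * (1/α) := by
            apply mul_le_mul_of_nonneg_right _ (by positivity)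
            linarith
    have hX : (0:ℝ) < ((j:ℝ)+1) * q := by positivity
    have hidj := hid j hjm
    have : a j * (((j:ℝ)+1) * q) ≤ a (j+1) * (((j:ℝ)+1) * q) := by
      rw [hidj]
      exact mul_le_mul_of_nonneg_left key (ha0 j)
    exact le_of_mul_le_mul_right this hX
  have hdown : ∀ j, k ≤ j → j < m → a (j+1) ≤ a j := by
    intro j hkj hjm
    have h1 : (k:ℝ) ≤ (j:ℝ) := by exact_mod_cast hkj
    have key : ((m:ℝ) - j) * p ≤ ((j:ℝ)+1) * q := by
      rw [hpdef, hqdef]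
      have hstep : (m:ℝ) - j ≤ ((j:ℝ)+1)*(α-1) := by
        nlinarith [mul_nonneg (sub_nonneg.mpr h1) (le_of_lt hα0)]
      calc ((m:ℝ) - j) * (1/α) ≤ ((j:ℝ)+1)*(α-1) * (1/α) := by
            apply mul_le_mul_of_nonneg_right hstep (by positivity)
        _ = ((j:ℝ)+1) * (1 - 1/α) := by field_simp
    have hX : (0:ℝ) < ((j:ℝ)+1) * q := by positivity
    have hidj := hid j hjm
    have : a (j+1) * (((j:ℝ)+1) * q) ≤ a j * (((j:ℝ)+1) * q) := by
      rw [hidj]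
      exact mul_le_mul_of_nonneg_left key (ha0 j)
    exact le_of_mul_le_mul_right this hX
  have up_all : ∀ d, a (k - d) ≤ a k := by
    intro d
    induction d with
    | zero => simp
    | succ d ih =>
      rcases le_or_gt k d with h | h
      · have he : k - (d+1) = k - d := by omega
        rw [he]; exact ih
      · have h1 : k - (d+1) < k := by omega
        have h2 : k - (d+1) + 1 = k - d := by omega
        calc a (k-(d+1)) ≤ a (k-(d+1)+1) := hup _ h1
          _ = a (k - d) := by rw [h2]
          _ ≤ a k := ih
  have down_all : ∀ j, k ≤ j → a j ≤ a k := by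
    intro j hj
    induction j, hj using Nat.le_induction with
    | base => exact le_refl _
    | succ j hkj ih =>
      rcases lt_or_ge j m with hjm | hjm
      · exact le_trans (hdown j hkj hjm) ih
      · have hz : m.choose (j+1) = 0 := Nat.choose_eq_zero_of_lt (by omega)
        have : a (j+1) = 0 := by simp [hadef, hz]
        rw [this]; exact ha0 k
  intro j
  rcases le_or_gt j k with h | h
  · have := up_all (k - j)
    rwa [Nat.sub_sub_self h] at this
  · exact down_all j h.le


lemma choose_le_exp {α : ℝ} (hα : 1 ≤ α) (k : ℕ) :
    ((⌊α * (k:ℝ)⌋₊).choose k : ℝ) ≤ Real.exp (α * entropy (1/α) * k) := by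
  rcases eq_or_lt_of_le hα with heq | hα1
  · subst heq
    have hm : ⌊(1:ℝ) * (k:ℝ)⌋₊ = k := by
      rw [one_mul, Nat.floor_natCast]
    rw [hm, Nat.choose_self]
    norm_num [aux_entropy_one]
  · have hα0 : (0:ℝ) < α := by linarith
    set m := ⌊α * (k:ℝ)⌋₊ with hmdef
    have hm1 : (m:ℝ) ≤ α * k := Nat.floor_le (by positivity)
    have hkm : k ≤ m := Nat.le_floor (by nlinarith [Nat.cast_nonneg (α := ℝ) k])
    set p : ℝ := 1/α with hpdef
    set q : ℝ := 1 - 1/α with hqdef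
    have hp : 0 < p := by positivity
    have hq : 0 < q := by rw [hqdef, sub_pos, div_lt_one hα0]; linarith
    have hpq : p + q = 1 := by rw [hpdef, hqdef]; ring
    have hterm := term_le_one hp.le hq.le hpq hkm
    have hpow : p ^ k * q ^ (m - k) = Real.exp ((k:ℝ) * Real.log p + ((m:ℝ) - k) * Real.log q) := by
      rw [Real.exp_add]
      congr 1
      · rw [← Real.exp_log hp, ← Real.exp_nat_mul, Real.exp_log hp]
      · have : ((m - k : ℕ) : ℝ) = (m:ℝ) - k := by
          push_cast [Nat.cast_sub hkm]; ring
        rw [← Real.exp_log hq, ← Real.exp_nat_mul, Real.exp_log hq, this]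
    have hE : (0:ℝ) < p ^ k * q ^ (m - k) := by positivity
    have h1 : ((m.choose k : ℝ)) ≤ (p ^ k * q ^ (m - k))⁻¹ := by
      rw [inv_eq_one_div, le_div_iff₀ hE, ← mul_assoc]
      exact hterm
    have hq1 : q < 1 := by rw [hqdef]; have : 0 < 1/α := by positivity
                           linarith
    have hLq : Real.log (1 - 1/α) < 0 := Real.log_neg hq hq1
    have hexp : -((k:ℝ) * Real.log p + ((m:ℝ) - k) * Real.log q) ≤ α * entropy (1/α) * k := by
      rw [aux_c_spec hα1, hpdef, hqdef]
      nlinarith [mul_nonneg (by linarith : (0:ℝ) ≤ -Real.log (1 - 1/α))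
        (by linarith : (0:ℝ) ≤ α * k - m)]
    calc ((m.choose k : ℝ)) ≤ (p ^ k * q ^ (m - k))⁻¹ := h1
      _ = Real.exp (-((k:ℝ) * Real.log p + ((m:ℝ) - k) * Real.log q)) := by
          rw [hpow, ← Real.exp_neg]
      _ ≤ Real.exp (α * entropy (1/α) * k) := Real.exp_le_exp.mpr hexp

lemma exp_le_choose {α : ℝ} (hα1 : 1 < α) (k : ℕ) :
    Real.exp (α * entropy (1/α) * k) * (1 - 1/α) ≤
      ((⌊α * (k:ℝ)⌋₊ : ℝ) + 1) * ((⌊α * (k:ℝ)⌋₊).choose k : ℝ) := by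
  have hα0 : (0:ℝ) < α := by linarith
  set m := ⌊α * (k:ℝ)⌋₊ with hmdef
  have hm1 : (m:ℝ) ≤ α * k := Nat.floor_le (by positivity)
  have hm2 : α * (k:ℝ) < (m:ℝ) + 1 := Nat.lt_floor_add_one _
  have hkm : k ≤ m := Nat.le_floor (by nlinarith [Nat.cast_nonneg (α := ℝ) k])
  set p : ℝ := 1/α with hpdef
  set q : ℝ := 1 - 1/α with hqdef
  have hp : 0 < p := by positivity
  have hq : 0 < q := by rw [hqdef, sub_pos, div_lt_one hα0]; linarith
  have hq1 : q < 1 := by rw [hqdef]; have : 0 < 1/α := by positivity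
                         linarith
  have hpq : p + q = 1 := by rw [hpdef, hqdef]; ring
  have hmode := mode_max hα1 k m hkm hm1 hm2
  have hsum := sum_binom p q hpq m
  have h1 : (1:ℝ) ≤ ((m:ℝ) + 1) * ((m.choose k : ℝ) * p ^ k * q ^ (m - k)) := by
    calc (1:ℝ) = ∑ j ∈ Finset.range (m+1), (m.choose j : ℝ) * p ^ j * q ^ (m - j) := hsum.symm
      _
        ≤ ∑ _j ∈ Finset.range (m+1), (m.choose k : ℝ) * p ^ k * q ^ (m - k) :=
          Finset.sum_le_sum fun j _ => hmode j
      _ = ((m:ℝ) + 1) * ((m.choose k : ℝ) * p ^ k * q ^ (m - k)) := by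
          rw [Finset.sum_const, Finset.card_range, nsmul_eq_mul]
          push_cast; ring
  have hE : (0:ℝ) < p ^ k * q ^ (m - k) := by positivity
  have h2 : (p ^ k * q ^ (m - k))⁻¹ ≤ ((m:ℝ) + 1) * (m.choose k : ℝ) := by
    rw [inv_eq_one_div, div_le_iff₀ hE]
    nlinarith [h1]
  have hpow : p ^ k * q ^ (m - k) = Real.exp ((k:ℝ) * Real.log p + ((m:ℝ) - k) * Real.log q) := by
    rw [Real.exp_add]
    congr 1
    · rw [← Real.exp_log hp, ← Real.exp_nat_mul, Real.exp_log hp]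
    · have : ((m - k : ℕ) : ℝ) = (m:ℝ) - k := by
        push_cast [Nat.cast_sub hkm]; ring
      rw [← Real.exp_log hq, ← Real.exp_nat_mul, Real.exp_log hq, this]
  have hLq : Real.log (1 - 1/α) < 0 := Real.log_neg hq hq1
  have hexp : α * entropy (1/α) * k + Real.log q ≤
      -((k:ℝ) * Real.log p + ((m:ℝ) - k) * Real.log q) := by
    rw [aux_c_spec hα1, hpdef, hqdef]
    nlinarith [mul_nonneg (by linarith : (0:ℝ) ≤ -Real.log (1 - 1/α))
      (by linarith : (0:ℝ) ≤ (m:ℝ) + 1 - α * k)]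
  calc Real.exp (α * entropy (1/α) * k) * q
      = Real.exp (α * entropy (1/α) * k + Real.log q) := by
        rw [Real.exp_add, Real.exp_log hq]
    _ ≤ Real.exp (-((k:ℝ) * Real.log p + ((m:ℝ) - k) * Real.log q)) := Real.exp_le_exp.mpr hexp
    _ = (p ^ k * q ^ (m - k))⁻¹ := by rw [hpow, ← Real.exp_neg]
    _ ≤ ((m:ℝ) + 1) * (m.choose k : ℝ) := h2


set_option maxHeartbeats 1000000 in
/-- For `α ≥ 1` there is a constant `C > 0` such that for every `n ≥ 2`,
`n^(−C) · brute(α)^n ≤ max_{k ∈ ℕ, k < n/α} C(n,k)/C(⌊αk⌋,k) ≤ n^C · brute(α)^n`. -/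
theorem stmt14 (α : ℝ) (hα : 1 ≤ α) :
    ∃ C : ℝ, 0 < C ∧ ∀ (n : ℕ) (hn : 2 ≤ n),
      (n : ℝ) ^ (-C) * brute α ^ n ≤
        ((Finset.range n).filter (fun k : ℕ => (k : ℝ) < (n : ℝ) / α)).sup'
          (ratioSet_nonempty α hα n hn)
          (fun k => (n.choose k : ℝ) / ((⌊α * (k : ℝ)⌋₊).choose k : ℝ)) ∧
      ((Finset.range n).filter (fun k : ℕ => (k : ℝ) < (n : ℝ) / α)).sup'
          (ratioSet_nonempty α hα n hn)
          (fun k => (n.choose k : ℝ) / ((⌊α * (k : ℝ)⌋₊).choose k : ℝ)) ≤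
        (n : ℝ) ^ C * brute α ^ n := by
  have hα0 : (0:ℝ) < α := by linarith
  set c : ℝ := α * entropy (1/α) with hcdef
  have hc0 : 0 ≤ c := mul_nonneg hα0.le (aux_ent_nonneg hα)
  set r : ℝ := Real.exp (-c) with hrdef
  have hr0 : 0 < r := Real.exp_pos _
  have hr1 : r ≤ 1 := Real.exp_le_one_iff.mpr (by linarith)
  have hbrute : brute α = 1 + r := by
    rw [brute, hrdef, hcdef, neg_mul]
  have hbrute_pos : (0:ℝ) < brute α := by rw [hbrute]; linarith
  have hbrute2 : brute α ≤ 2 := by rw [hbrute]; linarith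
  have hrα : r ≤ 1/α := by
    rcases eq_or_lt_of_le hα with heq | hα1
    · rw [hrdef, hcdef, ← heq]
      norm_num [aux_entropy_one]
    · have hq : (0:ℝ) < 1 - 1/α := by
        rw [sub_pos, div_lt_one hα0]; linarith
      have hLq : Real.log (1-1/α) ≤ 0 := Real.log_nonpos hq.le (by
        have : 0 < 1/α := by positivity
        linarith)
      rw [hrdef, hcdef, aux_c_spec hα1]
      calc Real.exp (-(-Real.log (1/α) - (α-1)*Real.log (1-1/α)))
          ≤ Real.exp (Real.log (1/α)) := by
            apply Real.exp_le_exp.mpr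
            nlinarith [mul_nonpos_of_nonneg_of_nonpos (by linarith : (0:ℝ) ≤ α - 1) hLq]
        _ = 1/α := Real.exp_log (by positivity)
  set q0 : ℝ := 1 - 1/α with hq0def
  set C : ℝ := α + 2 + |Real.log q0| / Real.log 2 with hCdef
  have hlog2 : (0:ℝ) < Real.log 2 := Real.log_pos (by norm_num)
  have habsq : (0:ℝ) ≤ |Real.log q0| / Real.log 2 := by positivity
  have hC2 : 2 ≤ C := by rw [hCdef]; linarith
  have hCα : α ≤ C := by rw [hCdef]; linarith
  have hC0 : 0 < C := by linarith
  refine ⟨C, hC0, fun n hn => ?_⟩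
  have hn2 : (2:ℝ) ≤ n := by exact_mod_cast hn
  have hn0 : (0:ℝ) < n := by linarith
  have hn1 : (1:ℝ) ≤ n := by linarith
  have hlogn : Real.log 2 ≤ Real.log n := Real.log_le_log (by norm_num) hn2
  have hP2 : (n:ℝ) + 1 ≤ (n:ℝ) ^ C := by
    have h1 : (n:ℝ) ^ (2:ℝ) ≤ (n:ℝ) ^ C := Real.rpow_le_rpow_of_exponent_le hn1 hC2
    have h2 : (n:ℝ) + 1 ≤ (n:ℝ) ^ (2:ℝ) := by
      rw [show (2:ℝ) = ((2:ℕ):ℝ) by norm_num, Real.rpow_natCast]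
      nlinarith
    linarith
  have hrpow_pos : (0:ℝ) < (n:ℝ) ^ C := Real.rpow_pos_of_pos hn0 _
  have hsum : brute α ^ n = ∑ k ∈ Finset.range (n+1), (n.choose k : ℝ) * r ^ k := by
    rw [hbrute, add_comm (1:ℝ) r, add_pow]
    exact Finset.sum_congr rfl fun k _ => by rw [one_pow]; ring
  set w : ℕ → ℝ := fun k => (n.choose k : ℝ) * r ^ k with hwdef
  have hw0 : ∀ k, 0 ≤ w k := fun k =>
    mul_nonneg (Nat.cast_nonneg _) (pow_nonneg hr0.le _)
  have hterm_le : ∀ k, k ≤ n → w k ≤ brute α ^ n := by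
    intro k hk
    rw [hsum]
    exact Finset.single_le_sum (f := fun k => (n.choose k : ℝ) * r ^ k)
      (fun j _ => hw0 j) (Finset.mem_range.mpr (Nat.lt_succ_of_le hk))
  have hrk : ∀ k : ℕ, r ^ k = Real.exp (-(c * k)) := by
    intro k
    rw [hrdef, ← Real.exp_nat_mul]
    congr 1; ring
  have hBn_of_le : (n:ℝ) ≤ α → brute α ^ n ≤ (n:ℝ) ^ C := by
    intro hcase
    calc brute α ^ n ≤ 2 ^ n := pow_le_pow_left₀ hbrute_pos.le hbrute2 n
      _ = Real.exp ((n:ℝ) * Real.log 2) := by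
          rw [Real.exp_nat_mul, Real.exp_log (by norm_num : (0:ℝ) < 2)]
      _ ≤ Real.exp (C * Real.log n) := by
          apply Real.exp_le_exp.mpr
          nlinarith [mul_nonneg (by linarith : (0:ℝ) ≤ C - n) hlog2.le,
            mul_nonneg (by linarith : (0:ℝ) ≤ C) (by linarith : (0:ℝ) ≤ Real.log n - Real.log 2)]
      _ = (n:ℝ) ^ C := by rw [Real.rpow_def_of_pos hn0]; ring_nf
  constructor
  · -- LOWER BOUND
    rcases le_or_gt (n:ℝ) α with hcase | hcase
    · -- n ≤ α : use k = 0
      have h0mem : (0:ℕ) ∈ (Finset.range n).filter (fun k : ℕ => (k:ℝ) < (n:ℝ)/α) := by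
        refine Finset.mem_filter.mpr ⟨Finset.mem_range.mpr (by omega), ?_⟩
        simpa using div_pos hn0 hα0
      have hle := Finset.le_sup'
        (f := fun k => (n.choose k : ℝ) / ((⌊α * (k : ℝ)⌋₊).choose k : ℝ)) h0mem
      have hf0 : (n.choose 0 : ℝ) / ((⌊α * ((0:ℕ) : ℝ)⌋₊).choose 0 : ℝ) = 1 := by
        norm_num
      rw [hf0] at hle
      refine le_trans ?_ hle
      rw [Real.rpow_neg hn0.le, inv_mul_eq_div, div_le_one hrpow_pos]
      exact hBn_of_le hcase
    · -- α < n
      have hex : ∃ ks, ks ∈ Finset.range (n+1) ∧ brute α ^ n / ((n:ℝ)+1) ≤ w ks := by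
        by_contra hcon
        push_neg at hcon
        have hlt : ∑ k ∈ Finset.range (n+1), w k <
            ∑ _k ∈ Finset.range (n+1), brute α ^ n / ((n:ℝ)+1) :=
          Finset.sum_lt_sum_of_nonempty ⟨0, Finset.mem_range.mpr (by omega)⟩
            (fun i hi => hcon i hi)
        rw [Finset.sum_const, Finset.card_range, nsmul_eq_mul] at hlt
        rw [← hsum] at hlt
        push_cast at hlt
        have heq2 : ((n:ℝ)+1) * (brute α ^ n / ((n:ℝ)+1)) = brute α ^ n := by
          field_simp
        rw [heq2] at hlt
        exact lt_irrefl _ hlt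
      obtain ⟨ks, hksmem, hks⟩ := hex
      set K := ⌈((n:ℝ) - α)/(α+1)⌉₊ with hKdef
      have hKge : ((n:ℝ) - α)/(α+1) ≤ (K:ℝ) := Nat.le_ceil _
      have hKlt : (K:ℝ) < ((n:ℝ)+1)/(α+1) := by
        have h1 : (K:ℝ) < ((n:ℝ) - α)/(α+1) + 1 :=
          Nat.ceil_lt_add_one (div_nonneg (by linarith) (by linarith))
        have h2 : ((n:ℝ) - α)/(α+1) + 1 = ((n:ℝ)+1)/(α+1) := by
          field_simp
          ring
        linarith
      have hKn : (K:ℝ) < (n:ℝ)/α := by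
        have : ((n:ℝ)+1)/(α+1) < (n:ℝ)/α := by
          rw [div_lt_div_iff₀ (by linarith) hα0]
          nlinarith
        linarith
      have hdec : ∀ j, K ≤ j → w (j+1) ≤ w j := by
        intro j hKj
        rcases lt_or_ge j n with hjn | hjn
        · have hjn' : (j:ℝ) < n := by exact_mod_cast hjn
          have hid : (n.choose (j+1) : ℝ) * ((j:ℝ)+1) = (n.choose j : ℝ) * ((n:ℝ) - j) := by
            have hc := Nat.choose_succ_right_eq n j
            have := congrArg (fun x : ℕ => (x : ℝ)) hc
            push_cast [Nat.cast_sub hjn.le] at this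
            linarith
          have hKjr : ((n:ℝ) - α)/(α+1) ≤ (j:ℝ) :=
            le_trans hKge (by exact_mod_cast hKj)
          have hkey : ((n:ℝ) - j) * r ≤ (j:ℝ) + 1 := by
            have h1 : ((n:ℝ) - j) * r ≤ ((n:ℝ) - j) * (1/α) :=
              mul_le_mul_of_nonneg_left hrα (by linarith)
            have h2 : ((n:ℝ) - j) * (1/α) ≤ (j:ℝ) + 1 := by
              rw [mul_one_div, div_le_iff₀ hα0]
              linarith [(div_le_iff₀ (show (0:ℝ) < α+1 by linarith)).mp hKjr]
            linarith
          have hmul : w (j+1) * ((j:ℝ)+1) ≤ w j * ((j:ℝ)+1) := by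
            have e1 : w (j+1) * ((j:ℝ)+1) = w j * (((n:ℝ) - j) * r) := by
              simp only [hwdef]
              rw [pow_succ]
              linear_combination (r ^ j * r) * hid
            rw [e1]
            exact mul_le_mul_of_nonneg_left hkey (hw0 j)
          exact le_of_mul_le_mul_right hmul (by positivity)
        · have hz : n.choose (j+1) = 0 := Nat.choose_eq_zero_of_lt (by omega)
          have : w (j+1) = 0 := by simp [hwdef, hz]
          rw [this]; exact hw0 j
      have hchain : ∀ d, w (K + d) ≤ w K := by
        intro d
        induction d with
        | zero => simp
        | succ d ih =>
          have hstep := hdec (K+d) (Nat.le_add_right _ _)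
          calc w (K+(d+1)) = w ((K+d)+1) := by rw [Nat.add_succ]
            _ ≤ w (K+d) := hstep
            _ ≤ w K := ih
      set khat := min ks K with hkhatdef
      have hwk : brute α ^ n / ((n:ℝ)+1) ≤ w khat := by
        rcases le_or_gt ks K with h | h
        · rw [hkhatdef, min_eq_left h]; exact hks
        · rw [hkhatdef, min_eq_right h.le]
          have hch := hchain (ks - K)
          rw [Nat.add_sub_cancel' h.le] at hch
          exact le_trans hks hch
      have hkhatK : khat ≤ K := min_le_right _ _
      have hkhatlt : (khat:ℝ) < (n:ℝ)/α :=
        lt_of_le_of_lt (by exact_mod_cast hkhatK) hKn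
      have hkhatn : khat < n := by
        have : (khat:ℝ) < (n:ℝ) := lt_of_lt_of_le hkhatlt (div_le_self hn0.le hα)
        exact_mod_cast this
      have hmem : khat ∈ (Finset.range n).filter (fun k : ℕ => (k:ℝ) < (n:ℝ)/α) :=
        Finset.mem_filter.mpr ⟨Finset.mem_range.mpr hkhatn, hkhatlt⟩
      have hchoose_pos : 0 < (⌊α * (khat:ℝ)⌋₊).choose khat :=
        Nat.choose_pos (Nat.le_floor (by nlinarith [Nat.cast_nonneg (α := ℝ) khat]))
      have hL1 : ((⌊α * (khat:ℝ)⌋₊).choose khat : ℝ) ≤ Real.exp (c * khat) :=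
        choose_le_exp hα khat
      have hf : w khat ≤ (n.choose khat : ℝ) / ((⌊α * (khat:ℝ)⌋₊).choose khat : ℝ) := by
        have e1 : w khat = (n.choose khat : ℝ) / Real.exp (c * khat) := by
          simp only [hwdef]
          rw [hrk khat, Real.exp_neg, div_eq_mul_inv]
        rw [e1]
        apply div_le_div_of_nonneg_left (Nat.cast_nonneg _) _ hL1
        exact_mod_cast hchoose_pos
      calc (n:ℝ) ^ (-C) * brute α ^ n = brute α ^ n / (n:ℝ) ^ C := by
            rw [Real.rpow_neg hn0.le]; ring
        _ ≤ brute α ^ n / ((n:ℝ)+1) :=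
            div_le_div_of_nonneg_left (pow_nonneg hbrute_pos.le n) (by linarith) hP2
        _ ≤ w khat := hwk
        _ ≤ (n.choose khat : ℝ) / ((⌊α * (khat:ℝ)⌋₊).choose khat : ℝ) := hf
        _ ≤ _ := Finset.le_sup'
            (f := fun k => (n.choose k : ℝ) / ((⌊α * (k : ℝ)⌋₊).choose k : ℝ)) hmem
  · -- UPPER BOUND
    apply Finset.sup'_le
    intro k hk
    obtain ⟨hkr, hkd⟩ := Finset.mem_filter.mp hk
    have hkn : k < n := Finset.mem_range.mp hkr
    have hαk : α * (k:ℝ) < n := by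
      rw [lt_div_iff₀ hα0] at hkd
      linarith
    have hterm := hterm_le k hkn.le
    have hnC1 : (1:ℝ) ≤ (n:ℝ) ^ C := Real.one_le_rpow hn1 hC0.le
    rcases eq_or_lt_of_le hα with heq | hα1
    · -- α = 1
      have hm : ⌊α * (k:ℝ)⌋₊ = k := by
        rw [← heq, one_mul, Nat.floor_natCast]
      rw [hm, Nat.choose_self]
      have hrone : r = 1 := by
        rw [hrdef, hcdef, ← heq]
        norm_num [aux_entropy_one]
      have : (n.choose k : ℝ) = w k := by
        simp [hwdef, hrone]
      rw [Nat.cast_one, div_one, this]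
      calc w k ≤ brute α ^ n := hterm
        _ = 1 * brute α ^ n := (one_mul _).symm
        _ ≤ (n:ℝ) ^ C * brute α ^ n :=
            mul_le_mul_of_nonneg_right hnC1 (pow_nonneg hbrute_pos.le n)
    · -- α > 1
      have hq0pos : (0:ℝ) < q0 := by
        rw [hq0def, sub_pos, div_lt_one hα0]; linarith
      have hq0lt1 : q0 < 1 := by
        rw [hq0def]
        have : 0 < 1/α := by positivity
        linarith
      have hLq0 : Real.log q0 < 0 := Real.log_neg hq0pos hq0lt1
      have hP4 : (n:ℝ)/q0 ≤ (n:ℝ) ^ C := by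
        have habs : |Real.log q0| = -Real.log q0 := abs_of_nonpos hLq0.le
        have e1 : (n:ℝ) ^ C = Real.exp (Real.log n * C) := Real.rpow_def_of_pos hn0 C
        have e2 : (n:ℝ)/q0 = Real.exp (Real.log n - Real.log q0) := by
          rw [Real.exp_sub, Real.exp_log hn0, Real.exp_log hq0pos]
        rw [e1, e2]
        apply Real.exp_le_exp.mpr
        have h3 : -Real.log q0 ≤ (C - 1) * Real.log n := by
          have hC1 : |Real.log q0| / Real.log 2 ≤ C - 1 := by
            rw [hCdef]; linarith
          calc -Real.log q0 = (|Real.log q0| / Real.log 2) * Real.log 2 := by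
                rw [habs]; field_simp
            _ ≤ (C-1) * Real.log n := by
                apply mul_le_mul hC1 hlogn hlog2.le (by linarith)
        nlinarith
      set m := ⌊α * (k:ℝ)⌋₊ with hmdef
      have hm1 : (m:ℝ) ≤ α * k := Nat.floor_le (by positivity)
      have hmn : (m:ℝ) + 1 ≤ (n:ℝ) := by
        have : m < n := by
          have : (m:ℝ) < n := lt_of_le_of_lt hm1 hαk
          exact_mod_cast this
        exact_mod_cast this
      have hU := exp_le_choose hα1 k
      have hexp_pos : (0:ℝ) < Real.exp (c * k) := Real.exp_pos _
      have hBpos : (0:ℝ) < Real.exp (c * k) * q0 / ((m:ℝ)+1) := by positivity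
      have hBle : Real.exp (c * k) * q0 / ((m:ℝ)+1) ≤ (m.choose k : ℝ) := by
        rw [div_le_iff₀ (by positivity : (0:ℝ) < (m:ℝ)+1)]
        calc Real.exp (c * k) * q0 ≤ ((m:ℝ)+1) * (m.choose k : ℝ) := hU
          _ = (m.choose k : ℝ) * ((m:ℝ)+1) := by ring
      calc (n.choose k : ℝ) / (m.choose k : ℝ)
          ≤ (n.choose k : ℝ) / (Real.exp (c * k) * q0 / ((m:ℝ)+1)) :=
            div_le_div_of_nonneg_left (Nat.cast_nonneg _) hBpos hBle
        _ = w k * (((m:ℝ)+1) / q0) := by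
            simp only [hwdef]
            rw [hrk k, Real.exp_neg]
            field_simp
        _ ≤ brute α ^ n * ((n:ℝ)/q0) := by
            have h1 : ((m:ℝ)+1)/q0 ≤ (n:ℝ)/q0 := by
              rw [div_le_div_iff₀ hq0pos hq0pos]
              nlinarith [hmn, hq0pos]
            exact mul_le_mul hterm h1
              (div_nonneg (by positivity) hq0pos.le) (pow_nonneg hbrute_pos.le n)
        _ ≤ brute α ^ n * (n:ℝ) ^ C :=
            mul_le_mul_of_nonneg_left hP4 (pow_nonneg hbrute_pos.le n)
        _ = (n:ℝ) ^ C * brute α ^ n := by ring
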